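/- Let M be a monoid and k an algebraically closed M-field with |k| > |M|. For every set F of M-polynomials in variables X₁,…,Xₙ over k, the ideal I(V(F)) of M-polynomials vanishing on all solutions of F in (k^M)^n equals the radical of the ideal generated by {σ^m(f) : f ∈ F, m ∈ M}. -/

import Mathlib

set_option maxHeartbeats 1000000
set_option synthInstance.maxHeartbeats 400000

open MvPolynomial Cardinal

universe v

section NSS

variable {k : Type v} [Field k] [IsAlgClosed k]

theorem small_field_ext (L : Type v) [Field L] [Algebra k L]
    (h : Module.rank k L < #k) : Function.Surjective (algebraMap k L) := by
  have halg : Algebra.IsAlgebraic k L := by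
    refine ⟨fun t => ?_⟩
    by_contra ht
    have h1 : #k ≤ Module.rank k L :=
      (Transcendental.linearIndependent_sub_inv (x := t) ht).cardinal_le_rank
    exact absurd h (not_lt.2 h1)
  exact IsAlgClosed.algebraMap_bijective_of_isIntegral.2

/-- Every maximal ideal of a polynomial ring in fewer than `#k` variables
over an algebraically closed field `k` has a zero. -/
theorem aux_maximal_zero {σ : Type v} (hσ : #σ < #k)
    (m : Ideal (MvPolynomial σ k)) [hm : m.IsMaximal] :
    ∃ x : σ → k, ∀ p ∈ m, MvPolynomial.eval x p = 0 := by
  cases finite_or_infinite σ with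
  | inl hfin =>
    obtain ⟨x, hx⟩ := (MvPolynomial.isMaximal_iff_eq_vanishingIdeal_singleton (I := m)).1 hm
    exact ⟨x, fun p hp => (MvPolynomial.mem_vanishingIdeal_singleton_iff x p).1 (hx ▸ hp)⟩
  | inr hinf =>
    have hrank : Module.rank k (MvPolynomial σ k ⧸ m) ≤ #(σ →₀ ℕ) := by
      have h := LinearMap.rank_le_of_surjective (Ideal.Quotient.mkₐ k m).toLinearMap
        (Ideal.Quotient.mkₐ_surjective k m)
      rwa [MvPolynomial.rank_eq] at h
    have hcard2 : #(σ →₀ ℕ) < #k := by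
      rw [Cardinal.mk_finsupp_nat]
      exact max_lt hσ ((aleph0_le_mk σ).trans_lt hσ)
    letI : Field (MvPolynomial σ k ⧸ m) := Ideal.Quotient.field m
    have hsurj : Function.Surjective (algebraMap k (MvPolynomial σ k ⧸ m)) :=
      small_field_ext _ (lt_of_le_of_lt hrank hcard2)
    have hinj : Function.Injective (algebraMap k (MvPolynomial σ k ⧸ m)) :=
      (algebraMap k (MvPolynomial σ k ⧸ m)).injective
    let e : k ≃+* (MvPolynomial σ k ⧸ m) :=
      RingEquiv.ofBijective (algebraMap k (MvPolynomial σ k ⧸ m)) ⟨hinj, hsurj⟩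
    let φ : MvPolynomial σ k →+* k := e.symm.toRingHom.comp (Ideal.Quotient.mk m)
    refine ⟨fun s => φ (X s), fun p hp => ?_⟩
    have heq : (MvPolynomial.eval (fun s => φ (X s)) : MvPolynomial σ k →+* k) = φ := by
      apply MvPolynomial.ringHom_ext
      · intro a
        simp only [eval_C]
        show a = e.symm ((Ideal.Quotient.mk m) (C a))
        rw [show (Ideal.Quotient.mk m) (C a) = e a from rfl, RingEquiv.symm_apply_apply]
      · intro s
        simp only [eval_X]
    have : MvPolynomial.eval (fun s => φ (X s)) p = φ p := congrFun (congrArg _ heq) p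
    rw [this]
    show e.symm ((Ideal.Quotient.mk m) p) = 0
    rw [(Ideal.Quotient.eq_zero_iff_mem).2 hp, map_zero]

theorem aux_weak {σ : Type v} (hσ : #σ < #k)
    {I : Ideal (MvPolynomial σ k)} (hI : I ≠ ⊤) :
    ∃ x : σ → k, ∀ p ∈ I, MvPolynomial.eval x p = 0 := by
  obtain ⟨m, hmmax, hIm⟩ := Ideal.exists_le_maximal I hI
  obtain ⟨x, hx⟩ := aux_maximal_zero hσ m
  exact ⟨x, fun p hp => hx p (hIm hp)⟩

/-- Strong Nullstellensatz for fewer than `#k` variables. -/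
theorem aux_nss {σ : Type v} (hσ : #σ < #k) (I : Ideal (MvPolynomial σ k)) :
    MvPolynomial.vanishingIdeal k (MvPolynomial.zeroLocus k I) = I.radical := by
  refine le_antisymm ?_ (MvPolynomial.radical_le_vanishingIdeal_zeroLocus (K := k) I)
  intro p hp
  by_contra hpr
  rw [Ideal.radical_eq_sInf, Ideal.mem_sInf] at hpr
  push_neg at hpr
  obtain ⟨P, ⟨hIP, hPprime⟩, hpP⟩ := hpr
  haveI := hPprime
  -- Rabinowitsch trick in `MvPolynomial (Option σ) k`
  let A := MvPolynomial σ k ⧸ P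
  let K := FractionRing A
  let ψ : MvPolynomial σ k →+* K := (algebraMap A K).comp (Ideal.Quotient.mk P)
  let c : k →+* K := ψ.comp MvPolynomial.C
  let v : Option σ → K := fun o => o.elim ((ψ p)⁻¹) fun s => ψ (X s)
  have hψp : ψ p ≠ 0 := by
    intro h
    have h0 : (Ideal.Quotient.mk P) p = 0 :=
      (IsFractionRing.injective A K) (show algebraMap A K ((Ideal.Quotient.mk P) p)
        = algebraMap A K 0 by rw [map_zero]; exact h)
    exact hpP ((Ideal.Quotient.eq_zero_iff_mem).1 h0)
  have hren : ∀ q : MvPolynomial σ k, eval₂ c v (rename some q) = ψ q := by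
    intro q
    rw [eval₂_rename]
    have heq : (eval₂Hom c (v ∘ some) : MvPolynomial σ k →+* K) = ψ :=
      MvPolynomial.ringHom_ext (fun a => by simp [c]) (fun s => by simp [v])
    calc eval₂ c (v ∘ some) q = eval₂Hom c (v ∘ some) q := rfl
    _ = ψ q := congrFun (congrArg _ heq) q
  let J : Ideal (MvPolynomial (Option σ) k) :=
    Ideal.span ({1 - X none * rename some p} ∪
      (rename (some : σ → Option σ) '' (P : Set (MvPolynomial σ k))))
  have hJ : J ≠ ⊤ := by
    intro htop
    have hker : J ≤ RingHom.ker (eval₂Hom c v) := by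
      rw [Ideal.span_le]
      rintro q (hq | ⟨q', hq', rfl⟩)
      · rw [Set.mem_singleton_iff] at hq
        subst hq
        simp only [SetLike.mem_coe, RingHom.mem_ker, map_sub, map_one, map_mul]
        have h1 : eval₂Hom c v (rename some p) = ψ p := hren p
        have h2 : eval₂Hom c v (X (none : Option σ)) = (ψ p)⁻¹ := by simp [v]
        rw [h1, h2, inv_mul_cancel₀ hψp, sub_self]
      · simp only [SetLike.mem_coe, RingHom.mem_ker]
        rw [show (eval₂Hom c v) (rename some q') = eval₂ c v (rename some q') from rfl, hren]
        show (algebraMap A K) ((Ideal.Quotient.mk P) q') = 0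
        rw [(Ideal.Quotient.eq_zero_iff_mem).2 hq', map_zero]
    have h1 : (1 : MvPolynomial (Option σ) k) ∈ J := htop ▸ Submodule.mem_top
    have h2 := hker h1
    rw [RingHom.mem_ker, map_one] at h2
    exact one_ne_zero h2
  have hOσ : #(Option σ) < #k := by
    rw [Cardinal.mk_option]
    exact Cardinal.add_lt_of_lt (aleph0_le_mk k) hσ
      (Cardinal.one_lt_aleph0.trans_le (aleph0_le_mk k))
  obtain ⟨y, hy⟩ := aux_weak hOσ hJ
  have hx : (y ∘ some) ∈ MvPolynomial.zeroLocus k I := by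
    intro q hq
    have hmem : rename some q ∈ J :=
      Ideal.subset_span (Or.inr ⟨q, hIP hq, rfl⟩)
    have h := hy _ hmem
    rwa [eval_rename] at h
  have hp0 : MvPolynomial.eval (y ∘ some) p = 0 := hp _ hx
  have hmem1 : (1 - X none * rename some p) ∈ J :=
    Ideal.subset_span (Or.inl rfl)
  have h := hy _ hmem1
  rw [map_sub, map_one, map_mul, eval_rename, hp0, mul_zero, sub_zero] at h
  exact one_ne_zero h

end NSS


/-- Strong Nullstellensatz for `M`-equations: if `k` is an algebraically closed
`M`-field with `|M| < |k|`, then for any set `F` of `M`-polynomials,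
`I(V(F)) = √⟨σ^m(F) : m ∈ M⟩`, where solutions are taken in `(k^M)^n`. -/
theorem stmt4.{u} (M : Type u) [Monoid M] (k : Type u) [Field k] [IsAlgClosed k]
    (σk : M → (k →+* k)) (hone : σk 1 = RingHom.id k)
    (hmul : ∀ m₁ m₂ : M, σk (m₁ * m₂) = (σk m₁).comp (σk m₂))
    (hcard : Cardinal.mk M < Cardinal.mk k)
    (n : ℕ) (F : Set (MvPolynomial (M × Fin n) k)) :
    {f : MvPolynomial (M × Fin n) k |
      ∀ x : Fin n → M → k,
        (∀ g ∈ F, ∀ ℓ : M,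
            MvPolynomial.eval₂ (σk ℓ) (fun p : M × Fin n => x p.2 (ℓ * p.1)) g = 0) →
        ∀ ℓ : M, MvPolynomial.eval₂ (σk ℓ) (fun p : M × Fin n => x p.2 (ℓ * p.1)) f = 0}
    = ↑(Ideal.span {q : MvPolynomial (M × Fin n) k |
        ∃ g ∈ F, ∃ m : M, q = MvPolynomial.rename (fun p : M × Fin n => (m * p.1, p.2))
          (MvPolynomial.map (σk m) g)}).radical := by
  classical
  -- the translation operators
  let τ : M → MvPolynomial (M × Fin n) k →+* MvPolynomial (M × Fin n) k := fun m =>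
    ((rename (fun p : M × Fin n => (m * p.1, p.2))).toRingHom).comp (MvPolynomial.map (σk m))
  have hτ_apply : ∀ (m : M) (f : MvPolynomial (M × Fin n) k),
      τ m f = rename (fun p : M × Fin n => (m * p.1, p.2)) (MvPolynomial.map (σk m) f) :=
    fun _ _ => rfl
  have hτ_one : ∀ f : MvPolynomial (M × Fin n) k, τ 1 f = f := by
    intro f
    rw [hτ_apply, hone, MvPolynomial.map_id,
      show (fun p : M × Fin n => ((1 : M) * p.1, p.2)) = id from funext fun p => by simp,
      rename_id, AlgHom.id_apply]
  have hτ_comp : ∀ (ℓ m : M) (f : MvPolynomial (M × Fin n) k), τ ℓ (τ m f) = τ (ℓ * m) f := by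
    intro ℓ m f
    rw [hτ_apply, hτ_apply, map_rename, rename_rename, MvPolynomial.map_map, ← hmul, hτ_apply,
      show ((fun p : M × Fin n => (ℓ * p.1, p.2)) ∘ fun p : M × Fin n => (m * p.1, p.2))
        = fun p : M × Fin n => (ℓ * m * p.1, p.2) from funext fun p => by simp [mul_assoc]]
  have hkey : ∀ (ℓ : M) (f : MvPolynomial (M × Fin n) k) (y : M × Fin n → k),
      MvPolynomial.eval₂ (σk ℓ) (fun p : M × Fin n => y (ℓ * p.1, p.2)) f
        = MvPolynomial.eval y (τ ℓ f) := by
    intro ℓ f y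
    rw [hτ_apply, eval_rename, eval_map]
    rfl
  set S : Set (MvPolynomial (M × Fin n) k) :=
    {q : MvPolynomial (M × Fin n) k |
      ∃ g ∈ F, ∃ m : M, q = MvPolynomial.rename (fun p : M × Fin n => (m * p.1, p.2))
        (MvPolynomial.map (σk m) g)} with hS
  set J : Ideal (MvPolynomial (M × Fin n) k) := Ideal.span S with hJ
  have hScard : #(M × Fin n) < #k := by
    rw [Cardinal.mk_prod]
    refine Cardinal.mul_lt_of_lt (aleph0_le_mk k) ?_ ?_
    · rwa [Cardinal.lift_uzero]
    · exact lt_of_lt_of_le (Cardinal.lift_lt_aleph0.2 (Cardinal.lt_aleph0_of_finite (Fin n)))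
        (aleph0_le_mk k)
  have hnss := aux_nss hScard J
  -- membership in the zero locus of J
  have hmemV : ∀ y : M × Fin n → k,
      y ∈ MvPolynomial.zeroLocus k J ↔ ∀ g ∈ F, ∀ m : M, MvPolynomial.eval y (τ m g) = 0 := by
    intro y
    rw [hJ, MvPolynomial.zeroLocus_span]
    constructor
    · intro hy g hg m
      exact hy (τ m g) ⟨g, hg, m, hτ_apply m g⟩
    · rintro hy q ⟨g, hg, m, rfl⟩
      exact hy g hg m
  -- J is stable under the translations
  have hstable : ∀ (ℓ : M) (q : MvPolynomial (M × Fin n) k), q ∈ J → τ ℓ q ∈ J := by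
    intro ℓ q hq
    have himg : Ideal.map (τ ℓ) J ≤ J := by
      rw [hJ, Ideal.map_span, Ideal.span_le]
      rintro q' ⟨q'', ⟨g, hg, m, rfl⟩, rfl⟩
      exact Ideal.subset_span ⟨g, hg, ℓ * m, by rw [← hτ_apply, ← hτ_apply, hτ_comp]⟩
    exact himg (Ideal.mem_map_of_mem (τ ℓ) hq)
  ext f
  simp only [Set.mem_setOf_eq, SetLike.mem_coe]
  constructor
  · intro hf
    -- f vanishes on V(F); then so does τ 1 f = f, hence f ∈ √J by the Nullstellensatz
    have : τ 1 f ∈ MvPolynomial.vanishingIdeal k (MvPolynomial.zeroLocus k J) := by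
      intro y hy
      show MvPolynomial.eval y (τ 1 f) = 0
      rw [← hkey]
      exact hf (fun j m => y (m, j))
        (fun g hg ℓ => by rw [hkey]; exact ((hmemV y).1 hy) g hg ℓ) 1
    rw [hnss, hτ_one] at this
    exact this
  · intro hf x hx ℓ
    -- τ ℓ f ∈ √J since J is τ-stable, hence τ ℓ f vanishes on V(F)
    have hτf : τ ℓ f ∈ J.radical := by
      obtain ⟨r, hr⟩ := hf
      exact ⟨r, by rw [← map_pow]; exact hstable ℓ _ hr⟩
    rw [← hnss] at hτf
    have hy : (fun q : M × Fin n => x q.2 q.1) ∈ MvPolynomial.zeroLocus k J :=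
      (hmemV _).2 fun g hg m => by rw [← hkey]; exact hx g hg m
    have : MvPolynomial.eval _ (τ ℓ f) = 0 := hτf _ hy
    rw [← hkey] at this
    exact this
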